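/- Let ω : ℝ^m → ℝ^m be continuously differentiable with sup_x ‖Dω(x)‖ ≤ L < ∞, and λ > 0 with λ * L < 1. Then g(x) = x - λ • ω(x) is a C¹ diffeomorphism of ℝ^m onto itself when λ * L ≤ 1/3. -/

import Mathlib

theorem stmt_10 {m : ℕ} (ω : EuclideanSpace ℝ (Fin m) → EuclideanSpace ℝ (Fin m))
    (hω : ContDiff ℝ 1 ω) (L : ℝ) (hL : ∀ x, ‖fderiv ℝ ω x‖ ≤ L)
    (lam : ℝ) (hlam : 0 < lam) (h : lam * L ≤ 1 / 3) :
    ∃ ginv : EuclideanSpace ℝ (Fin m) → EuclideanSpace ℝ (Fin m),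
      ContDiff ℝ 1 (fun x => x - lam • ω x) ∧ ContDiff ℝ 1 ginv ∧
      Function.LeftInverse ginv (fun x => x - lam • ω x) ∧
      Function.RightInverse ginv (fun x => x - lam • ω x) := by
  have hL0 : 0 ≤ L := le_trans (norm_nonneg _) (hL 0)
  have hlt1 : lam * L < 1 := lt_of_le_of_lt h (by norm_num)
  set g : EuclideanSpace ℝ (Fin m) → EuclideanSpace ℝ (Fin m) :=
    fun x => x - lam • ω x with hg_def
  have hgC : ContDiff ℝ 1 g := contDiff_id.sub (hω.const_smul lam)
  have hωdiff : Differentiable ℝ ω := hω.differentiable one_ne_zero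
  have hfd : ∀ x : EuclideanSpace ℝ (Fin m),
      fderiv ℝ (fun y => lam • ω y) x = lam • fderiv ℝ ω x := by
    intro x
    exact fderiv_const_smul (hωdiff x) lam
  have hbound : ∀ x : EuclideanSpace ℝ (Fin m),
      ‖fderiv ℝ (fun y => lam • ω y) x‖ ≤ lam * L := by
    intro x
    rw [hfd x, norm_smul, Real.norm_eq_abs, abs_of_pos hlam]
    exact mul_le_mul_of_nonneg_left (hL x) hlam.le
  have hlip : ∀ x y : EuclideanSpace ℝ (Fin m),
      ‖lam • ω x - lam • ω y‖ ≤ lam * L * ‖x - y‖ := by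
    intro x y
    exact Convex.norm_image_sub_le_of_norm_fderiv_le
      (fun z _ => ((hωdiff z).const_smul lam)) (fun z _ => hbound z)
      convex_univ (Set.mem_univ y) (Set.mem_univ x)
  have hA : ApproximatesLinearOn g
      ((ContinuousLinearEquiv.refl ℝ (EuclideanSpace ℝ (Fin m))) :
        EuclideanSpace ℝ (Fin m) →L[ℝ] EuclideanSpace ℝ (Fin m)) Set.univ
      (Real.toNNReal (lam * L)) := by
    intro x _ y _
    have hxy : g x - g y - (x - y) = -(lam • ω x - lam • ω y) := by
      simp only [hg_def]; abel
    simp only [ContinuousLinearEquiv.coe_refl, ContinuousLinearMap.coe_id', id_eq, hxy,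
      norm_neg]
    rw [Real.coe_toNNReal _ (mul_nonneg hlam.le hL0)]
    exact hlip x y
  have hc : Subsingleton (EuclideanSpace ℝ (Fin m)) ∨
      Real.toNNReal (lam * L) <
        ‖((ContinuousLinearEquiv.refl ℝ (EuclideanSpace ℝ (Fin m))).symm :
          EuclideanSpace ℝ (Fin m) →L[ℝ] EuclideanSpace ℝ (Fin m))‖₊⁻¹ := by
    by_cases hs : Subsingleton (EuclideanSpace ℝ (Fin m))
    · exact Or.inl hs
    · right
      have : Nontrivial (EuclideanSpace ℝ (Fin m)) := not_subsingleton_iff_nontrivial.mp hs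
      have h1 : ‖((ContinuousLinearEquiv.refl ℝ (EuclideanSpace ℝ (Fin m))).symm :
          EuclideanSpace ℝ (Fin m) →L[ℝ] EuclideanSpace ℝ (Fin m))‖₊ = 1 := by
        simp
      rw [h1, inv_one]
      rw [← Real.toNNReal_one]
      exact Real.toNNReal_lt_toNNReal_iff'.mpr ⟨hlt1, one_pos⟩
  set homeo : EuclideanSpace ℝ (Fin m) ≃ₜ EuclideanSpace ℝ (Fin m) :=
    hA.toHomeomorph g hc with hhomeo
  have hcoe : (homeo : EuclideanSpace ℝ (Fin m) → EuclideanSpace ℝ (Fin m)) = g := rfl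
  obtain ⟨ginv, hgi_l, hgi_r⟩ :
      ∃ gi : EuclideanSpace ℝ (Fin m) → EuclideanSpace ℝ (Fin m),
        (∀ w, gi (g w) = w) ∧ (∀ y, g (gi y) = y) :=
    ⟨homeo.symm, fun w => homeo.symm_apply_apply w, fun y => homeo.apply_symm_apply y⟩
  refine ⟨ginv, hgC, ?_, ?_, ?_⟩
  · rw [contDiff_iff_contDiffAt]
    intro z
    set x := ginv z with hx
    have hz : g x = z := hgi_r z
    set t : EuclideanSpace ℝ (Fin m) →L[ℝ] EuclideanSpace ℝ (Fin m) :=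
      lam • fderiv ℝ ω x with ht_def
    have ht : ‖t‖ < 1 := by
      calc ‖t‖ ≤ ‖lam‖ * ‖fderiv ℝ ω x‖ := ContinuousLinearMap.opNorm_smul_le _ _
        _ ≤ lam * L := by
            rw [Real.norm_eq_abs, abs_of_pos hlam]
            exact mul_le_mul_of_nonneg_left (hL x) hlam.le
        _ < 1 := hlt1
    set e : EuclideanSpace ℝ (Fin m) ≃L[ℝ] EuclideanSpace ℝ (Fin m) :=
      ContinuousLinearEquiv.ofUnit (Units.oneSub t ht) with he
    have hfderiv : HasFDerivAt g
        ((e : EuclideanSpace ℝ (Fin m) →L[ℝ] EuclideanSpace ℝ (Fin m))) x := by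
      have h1 : HasFDerivAt g (ContinuousLinearMap.id ℝ (EuclideanSpace ℝ (Fin m)) - t) x :=
        (hasFDerivAt_id x).sub (((hωdiff x).hasFDerivAt).const_smul lam)
      have h2 : (e : EuclideanSpace ℝ (Fin m) →L[ℝ] EuclideanSpace ℝ (Fin m)) =
          ContinuousLinearMap.id ℝ (EuclideanSpace ℝ (Fin m)) - t := rfl
      rw [h2]; exact h1
    have hcd : ContDiffAt ℝ 1 g x := hgC.contDiffAt
    have hinv : ContDiffAt ℝ 1 (hcd.localInverse hfderiv one_ne_zero) (g x) :=
      hcd.to_localInverse hfderiv one_ne_zero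
    have hs := hcd.hasStrictFDerivAt' hfderiv one_ne_zero
    have huniq : ∀ᶠ y in nhds (g x),
        ginv y = HasStrictFDerivAt.localInverse g e x hs y :=
      hs.localInverse_unique (Filter.Eventually.of_forall fun w => hgi_l w)
    have heq : ginv =ᶠ[nhds (g x)] hcd.localInverse hfderiv one_ne_zero := huniq
    exact hz ▸ hinv.congr_of_eventuallyEq (hz ▸ heq)
  · exact fun x => hgi_l x
  · exact fun y => hgi_r y
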